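/- Let k ≥ 2 be an integer and i an integer with 0 ≤ i ≤ 2k, and let F(z) = φ^{4k−2i}(z) φ^{2i}(3z). Then the limit as Im(z) → ∞ of (3z+1)^{−2k} F(z/(3z+1)) equals (−1)^{i+k}/2^{2k}. That is, the first term of the Fourier series expansion of F at the cusp 1/3 is (−3z−1)^{2k} · (−1)^{i+k}/2^{2k}. -/

import Mathlib

open Complex UpperHalfPlane Filter

/-- Ramanujan's theta function `φ(z) = ∑_{n ∈ ℤ} q^{n²}`. -/
noncomputable def phi (z : ℂ) : ℂ :=
  ∑' n : ℤ, Complex.exp (2 * Real.pi * Complex.I * (n : ℂ) ^ 2 * z)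


open scoped UpperHalfPlane

open Real in
-- basic cpow helpers
lemma sq_half (x : ℂ) (hx : x ≠ 0) : (x ^ (1/2 : ℂ)) ^ 2 = x := by
  rw [sq, ← Complex.cpow_add _ _ hx]
  norm_num

lemma re_half_pos {x : ℂ} (hx : x ≠ 0) (h : x.arg ≠ Real.pi) :
    0 < (x ^ (1/2 : ℂ)).re := by
  rw [Complex.cpow_def_of_ne_zero hx, Complex.exp_re]
  have him : (Complex.log x * (1/2)).im = x.arg / 2 := by
    simp [Complex.mul_im, Complex.log_im]; ring
  rw [him]
  refine mul_pos (Real.exp_pos _) (Real.cos_pos_of_mem_Ioo ⟨?_, ?_⟩)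
  · have := Complex.neg_pi_lt_arg x; linarith
  · have := (Complex.arg_le_pi x).lt_of_ne h; linarith

lemma eq_sqrt {a b : ℂ} (h : a ^ 2 = b ^ 2) (ha : 0 < a.re) (hb : 0 < b.re) : a = b := by
  have h0 : (a - b) * (a + b) = 0 := by linear_combination h
  rcases mul_eq_zero.mp h0 with h1 | h1
  · exact sub_eq_zero.mp h1
  · exfalso
    have : (a + b).re = 0 := by rw [h1]; simp
    rw [Complex.add_re] at this; linarith

lemma pull {w : ℂ} (hw : 0 < w.re) {r : ℝ} (hr : 0 < r) :
    ((r : ℂ) * w) ^ (1/2 : ℂ) = (Real.sqrt r : ℂ) * w ^ (1/2 : ℂ) := by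
  have hwne : w ≠ 0 := fun h => by simp [h] at hw
  have hrne : (r : ℂ) ≠ 0 := by exact_mod_cast hr.ne'
  have hbase : (r : ℂ) * w ≠ 0 := mul_ne_zero hrne hwne
  refine eq_sqrt ?_ ?_ ?_
  · rw [sq_half _ hbase, mul_pow, sq_half _ hwne]
    congr 1
    rw [← Complex.ofReal_pow, Real.sq_sqrt hr.le]
  · refine re_half_pos hbase fun h => ?_
    have := Complex.arg_eq_pi_iff.mp h
    rw [Complex.re_ofReal_mul] at this
    nlinarith [this.1]
  · rw [Complex.re_ofReal_mul]
    refine mul_pos (Real.sqrt_pos.mpr hr) (re_half_pos hwne fun h => ?_)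
    have := Complex.arg_eq_pi_iff.mp h
    linarith [this.1]

-- theta S-transform restated
lemma theta_S {σ : ℂ} (hσ : 0 < σ.im) :
    jacobiTheta (-σ⁻¹) = (-Complex.I * σ) ^ (1/2 : ℂ) * jacobiTheta σ := by
  set τ' : ℍ := UpperHalfPlane.mk σ hσ with hτ'
  have h := jacobiTheta_S_smul τ'
  have hcoe : (τ' : ℂ) = σ := rfl
  have hc : ((ModularGroup.S • τ' : ℍ) : ℂ) = -σ⁻¹ := by
    rw [UpperHalfPlane.modular_S_smul]
    simp [UpperHalfPlane.coe_mk, hcoe, inv_neg]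
  rwa [hc, hcoe] at h

-- theta tends to 1 at i∞
lemma theta_tendsto_one : Tendsto jacobiTheta (Filter.comap Complex.im atTop) (nhds 1) := by
  have h1 := isBigO_at_im_infty_jacobiTheta_sub_one
  have h2 : Tendsto (fun τ : ℂ => Real.exp (-Real.pi * τ.im)) (Filter.comap Complex.im atTop)
      (nhds 0) := by
    refine Real.tendsto_exp_atBot.comp ?_
    have h0 : Tendsto (fun τ : ℂ => τ.im) (Filter.comap Complex.im atTop) atTop := tendsto_comap
    exact h0.const_mul_atTop_of_neg (neg_neg_iff_pos.mpr Real.pi_pos)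
  have h3 : Tendsto (fun τ => jacobiTheta τ - 1) (Filter.comap Complex.im atTop) (nhds 0) :=
    h1.trans_tendsto h2
  simpa using h3.add_const 1

lemma hasSum_phi {v : ℂ} (hv : 0 < v.im) :
    HasSum (fun n : ℤ => Complex.exp (2 * Real.pi * Complex.I * (n : ℂ) ^ 2 * v)) (phi v) := by
  have h2v : 0 < (2 * v).im := by simp [Complex.mul_im]; linarith
  have h := hasSum_jacobiTheta₂_term 0 h2v
  have he : (fun n : ℤ => jacobiTheta₂_term n 0 (2 * v)) =
      fun n : ℤ => Complex.exp (2 * Real.pi * Complex.I * (n : ℂ) ^ 2 * v) := by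
    funext n; unfold jacobiTheta₂_term; push_cast; ring_nf
  rw [he] at h
  rw [phi, h.tsum_eq]; exact h

lemma phi_eq_theta (x : ℂ) : phi x = jacobiTheta (2 * x) := by
  rw [phi, jacobiTheta]
  refine tsum_congr fun n => ?_
  congr 1; push_cast; ring

lemma phi_add_one (x : ℂ) : phi (1 + x) = phi x := by
  rw [phi, phi]
  refine tsum_congr fun n => ?_
  have : 2 * (Real.pi : ℂ) * Complex.I * (n : ℂ) ^ 2 * (1 + x)
      = (n ^ 2 : ℤ) * (2 * Real.pi * Complex.I) + 2 * Real.pi * Complex.I * (n : ℂ) ^ 2 * x := by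
    push_cast; ring
  rw [this, Complex.exp_add, Complex.exp_int_mul_two_pi_mul_I, one_mul]

noncomputable def om : ℂ := Complex.exp (2 * Real.pi * Complex.I / 3)

lemma om_cube : om ^ 3 = 1 := by
  rw [om, ← Complex.exp_nat_mul]
  rw [show ((3 : ℕ) : ℂ) * (2 * Real.pi * Complex.I / 3) = 2 * Real.pi * Complex.I by push_cast; ring]
  exact Complex.exp_two_pi_mul_I

lemma om_ne_one : om ≠ 1 := by
  intro h
  rw [om, Complex.exp_eq_one_iff] at h
  obtain ⟨n, hn⟩ := h
  have hπ : (2 * Real.pi * Complex.I : ℂ) ≠ 0 := by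
    simp [Real.pi_ne_zero, Complex.I_ne_zero]
  have h3 : (3 : ℂ) * n = 1 := by
    have := hn
    field_simp at this
    have h2 : ((n : ℂ) * 3) * (2 * Real.pi * Complex.I) = 1 * (2 * Real.pi * Complex.I) := by
      rw [one_mul]; linear_combination (-(2 * Real.pi * Complex.I)) * this
    have := mul_right_cancel₀ hπ h2
    linear_combination this
  have : ((3 * n : ℤ) : ℂ) = ((1 : ℤ) : ℂ) := by push_cast; linear_combination h3
  have := Int.cast_injective this
  omega

lemma om_rel : om ^ 2 + om + 1 = 0 := by
  have h : (om - 1) * (om ^ 2 + om + 1) = 0 := by linear_combination om_cube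
  rcases mul_eq_zero.mp h with h1 | h1
  · exact absurd (sub_eq_zero.mp h1) om_ne_one
  · exact h1

lemma phi_split {v : ℂ} (hv : 0 < v.im) :
    phi (1/3 + v) = (1 - om) * phi (9 * v) + om * phi v := by
  have h9 : 0 < ((9 : ℂ) * v).im := by
    have : ((9 : ℂ) * v).im = 9 * v.im := by simp [Complex.mul_im]
    rw [this]; linarith
  set f : ℤ → ℂ := fun n =>
    if (3 : ℤ) ∣ n then (1 - om) * Complex.exp (2 * Real.pi * Complex.I * (n : ℂ) ^ 2 * v) else 0
    with hf
  have hinj : Function.Injective (fun m : ℤ => 3 * m) :=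
    fun a b h => by simpa using h
  have hzero : ∀ x ∉ Set.range (fun m : ℤ => 3 * m), f x = 0 := by
    intro x hx
    rw [hf]
    simp only
    rw [if_neg]
    intro ⟨c, hc⟩
    exact hx ⟨c, hc.symm⟩
  have h1 : HasSum (f ∘ fun m : ℤ => 3 * m) ((1 - om) * phi (9 * v)) := by
    have := (hasSum_phi h9).mul_left (1 - om)
    refine this.congr_fun fun m => ?_
    simp only [Function.comp, hf]
    rw [if_pos ⟨m, rfl⟩]
    congr 2
    push_cast; ring
  have h3 : HasSum f ((1 - om) * phi (9 * v)) := (hinj.hasSum_iff hzero).mp h1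
  have h4 := h3.add ((hasSum_phi hv).mul_left om)
  have h5 : HasSum (fun n : ℤ => Complex.exp (2 * Real.pi * Complex.I * (n : ℂ) ^ 2 * (1/3 + v)))
      ((1 - om) * phi (9 * v) + om * phi v) := by
    refine h4.congr_fun fun n => ?_
    by_cases hd : (3 : ℤ) ∣ n
    · obtain ⟨q, rfl⟩ := hd
      have hfq : f (3 * q)
          = (1 - om) * Complex.exp (2 * Real.pi * Complex.I * ((3 * q : ℤ) : ℂ) ^ 2 * v) := by
        rw [hf]; simp only; rw [if_pos (dvd_mul_right 3 q)]
      rw [hfq]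
      have he : 2 * (Real.pi : ℂ) * Complex.I * ((3 * q : ℤ) : ℂ) ^ 2 * (1/3 + v)
          = (3 * q ^ 2 : ℤ) * (2 * Real.pi * Complex.I)
            + 2 * Real.pi * Complex.I * ((3 * q : ℤ) : ℂ) ^ 2 * v := by
        push_cast; ring
      rw [he, Complex.exp_add, Complex.exp_int_mul_two_pi_mul_I, one_mul]
      ring
    · have h01 : n % 3 = 1 ∨ n % 3 = 2 := by omega
      have hdvd : (3 : ℤ) ∣ n ^ 2 - 1 := by
        have hfac : n ^ 2 - 1 = (n - 1) * (n + 1) := by ring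
        rw [hfac]
        rcases h01 with h | h
        · exact Dvd.dvd.mul_right (by omega) _
        · exact Dvd.dvd.mul_left (by omega) _
      obtain ⟨q, hq⟩ := hdvd
      have hfq : f n = 0 := by rw [hf]; simp only; rw [if_neg hd]
      rw [hfq, zero_add]
      have hint : n ^ 2 = 3 * q + 1 := by omega
      have hn2 : ((n : ℤ) : ℂ) ^ 2 = 3 * (q : ℂ) + 1 := by exact_mod_cast hint
      have he : 2 * (Real.pi : ℂ) * Complex.I * ((n : ℤ) : ℂ) ^ 2 * (1/3 + v)
          = (q : ℂ) * (2 * Real.pi * Complex.I)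
            + (2 * Real.pi * Complex.I / 3 + 2 * Real.pi * Complex.I * ((n : ℤ) : ℂ) ^ 2 * v) := by
        rw [hn2]; push_cast; ring
      rw [he, Complex.exp_add]
      have hq1 : Complex.exp ((q : ℂ) * (2 * Real.pi * Complex.I)) = 1 := by
        exact_mod_cast Complex.exp_int_mul_two_pi_mul_I q
      rw [hq1, one_mul, Complex.exp_add, ← om]
  rw [phi]
  exact h5.tsum_eq

lemma neg_I_mul_re {τ : ℂ} : (-Complex.I * τ).re = τ.im := by
  simp [Complex.mul_re]

lemma neg_I_mul_ne {τ : ℂ} (hτ : 0 < τ.im) : -Complex.I * τ ≠ 0 := by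
  intro h
  have : (-Complex.I * τ).re = 0 := by rw [h]; simp
  rw [neg_I_mul_re] at this; linarith

lemma phiw (τ : ℂ) (hτ : 0 < τ.im) :
    phi (((τ - 1)/3) / τ) = (-Complex.I * τ) ^ (1/2 : ℂ) *
      ((1 - om) * (Real.sqrt (1/6) : ℂ) * jacobiTheta (((1/6 : ℝ) : ℂ) * τ)
        + om * (Real.sqrt (3/2) : ℂ) * jacobiTheta (((3/2 : ℝ) : ℂ) * τ)) := by
  have hτne : τ ≠ 0 := fun h => by simp [h] at hτ
  set v : ℂ := -(3 * τ)⁻¹ with hv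
  have hvim : 0 < v.im := by
    rw [hv, Complex.neg_im, Complex.inv_im]
    have h1 : (3 * τ).im = 3 * τ.im := by simp [Complex.mul_im]
    have h2 : 0 < Complex.normSq (3 * τ) := by
      apply Complex.normSq_pos.mpr; exact mul_ne_zero (by norm_num) hτne
    rw [h1]
    rw [neg_div, neg_neg]
    exact div_pos (by linarith) h2
  have harg : ((τ - 1)/3) / τ = 1/3 + v := by rw [hv]; field_simp; ring
  rw [harg, phi_split hvim, phi_eq_theta, phi_eq_theta]
  have him1 : 0 < (((1/6 : ℝ) : ℂ) * τ).im := by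
    rw [Complex.mul_im]; simp; linarith
  have him2 : 0 < (((3/2 : ℝ) : ℂ) * τ).im := by
    rw [Complex.mul_im]; simp; linarith
  have h18 : 2 * (9 * v) = -((((1/6 : ℝ) : ℂ) * τ))⁻¹ := by
    rw [hv]; push_cast; field_simp; ring
  have h2v : 2 * v = -((((3/2 : ℝ) : ℂ) * τ))⁻¹ := by
    rw [hv]; push_cast; field_simp
  rw [h18, h2v, theta_S him1, theta_S him2]
  have hp1 : (-Complex.I * (((1/6 : ℝ) : ℂ) * τ)) ^ (1/2 : ℂ)
      = (Real.sqrt (1/6) : ℂ) * (-Complex.I * τ) ^ (1/2 : ℂ) := by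
    rw [show -Complex.I * (((1/6 : ℝ) : ℂ) * τ) = ((1/6 : ℝ) : ℂ) * (-Complex.I * τ) by ring]
    exact pull (by rw [neg_I_mul_re]; exact hτ) (by norm_num)
  have hp2 : (-Complex.I * (((3/2 : ℝ) : ℂ) * τ)) ^ (1/2 : ℂ)
      = (Real.sqrt (3/2) : ℂ) * (-Complex.I * τ) ^ (1/2 : ℂ) := by
    rw [show -Complex.I * (((3/2 : ℝ) : ℂ) * τ) = ((3/2 : ℝ) : ℂ) * (-Complex.I * τ) by ring]
    exact pull (by rw [neg_I_mul_re]; exact hτ) (by norm_num)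
  rw [hp1, hp2]
  ring

lemma phi3w (τ : ℂ) (hτ : 0 < τ.im) :
    phi (3 * (((τ - 1)/3) / τ)) = (-Complex.I * τ) ^ (1/2 : ℂ) *
      ((Real.sqrt (1/2) : ℂ) * jacobiTheta (((1/2 : ℝ) : ℂ) * τ)) := by
  have hτne : τ ≠ 0 := fun h => by simp [h] at hτ
  have harg : 3 * (((τ - 1)/3) / τ) = 1 + (-τ⁻¹) := by field_simp; ring
  rw [harg, phi_add_one, phi_eq_theta]
  have him : 0 < (((1/2 : ℝ) : ℂ) * τ).im := by
    rw [Complex.mul_im]; simp; linarith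
  have h2 : 2 * (-τ⁻¹) = -((((1/2 : ℝ) : ℂ) * τ))⁻¹ := by
    push_cast; field_simp
  rw [h2, theta_S him]
  have hp : (-Complex.I * (((1/2 : ℝ) : ℂ) * τ)) ^ (1/2 : ℂ)
      = (Real.sqrt (1/2) : ℂ) * (-Complex.I * τ) ^ (1/2 : ℂ) := by
    rw [show -Complex.I * (((1/2 : ℝ) : ℂ) * τ) = ((1/2 : ℝ) : ℂ) * (-Complex.I * τ) by ring]
    exact pull (by rw [neg_I_mul_re]; exact hτ) (by norm_num)
  rw [hp]
  ring

lemma neg_one_pow_congr' {m n : ℕ} (h : m % 2 = n % 2) : (-1 : ℂ) ^ m = (-1 : ℂ) ^ n := by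
  conv_lhs => rw [← Nat.div_add_mod m 2]
  conv_rhs => rw [← Nat.div_add_mod n 2]
  rw [pow_add, pow_add, pow_mul, pow_mul, h]
  norm_num

lemma alg (k i : ℕ) (hi : i ≤ 2 * k) (τ A θ3 : ℂ) (hτ : 0 < τ.im) :
    (τ ^ (2 * k))⁻¹ * (((-Complex.I * τ) ^ (1/2 : ℂ) * A) ^ (4 * k - 2 * i) *
      ((-Complex.I * τ) ^ (1/2 : ℂ) * ((Real.sqrt (1/2) : ℂ) * θ3)) ^ (2 * i))
    = (-1 : ℂ) ^ k * ((2 : ℂ)⁻¹) ^ i * A ^ (4 * k - 2 * i) * θ3 ^ (2 * i) := by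
  have hτne : τ ≠ 0 := fun h => by simp [h] at hτ
  set u : ℂ := (-Complex.I * τ) ^ (1/2 : ℂ) with hu
  have hu2 : u ^ 2 = -Complex.I * τ := sq_half _ (neg_I_mul_ne hτ)
  have hupow : u ^ (4 * k - 2 * i) * u ^ (2 * i) = (-1 : ℂ) ^ k * τ ^ (2 * k) := by
    rw [← pow_add, Nat.sub_add_cancel (by omega)]
    rw [show 4 * k = 2 * (2 * k) by ring, pow_mul, hu2, neg_mul, neg_pow, mul_pow,
      show Complex.I ^ (2 * k) = (Complex.I ^ 2) ^ k by rw [← pow_mul]]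
    rw [Complex.I_sq]
    ring_nf
    congr 1
    exact neg_one_pow_congr' (by omega)
  have hc : ((Real.sqrt (1/2) : ℝ) : ℂ) ^ (2 * i) = ((2 : ℂ)⁻¹) ^ i := by
    rw [pow_mul, ← Complex.ofReal_pow, Real.sq_sqrt (by norm_num : (0:ℝ) ≤ 1/2)]
    norm_num
  calc (τ ^ (2 * k))⁻¹ * ((u * A) ^ (4 * k - 2 * i) *
        (u * ((Real.sqrt (1/2) : ℂ) * θ3)) ^ (2 * i))
      = (τ ^ (2 * k))⁻¹ * ((u ^ (4 * k - 2 * i) * u ^ (2 * i)) *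
          (A ^ (4 * k - 2 * i) * (((Real.sqrt (1/2) : ℝ) : ℂ) ^ (2 * i) * θ3 ^ (2 * i)))) := by
        rw [mul_pow, mul_pow, mul_pow]; ring
    _ = (τ ^ (2 * k))⁻¹ * τ ^ (2 * k) *
          ((-1 : ℂ) ^ k * ((2 : ℂ)⁻¹) ^ i * A ^ (4 * k - 2 * i) * θ3 ^ (2 * i)) := by
        rw [hupow, hc]; ring
    _ = (-1 : ℂ) ^ k * ((2 : ℂ)⁻¹) ^ i * A ^ (4 * k - 2 * i) * θ3 ^ (2 * i) := by
        rw [inv_mul_cancel₀ (pow_ne_zero _ hτne), one_mul]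

lemma final_value (k i : ℕ) (hi : i ≤ 2 * k) :
    (-1 : ℂ) ^ k * ((2 : ℂ)⁻¹) ^ i *
      ((1 - om) * (Real.sqrt (1/6) : ℂ) + om * (Real.sqrt (3/2) : ℂ)) ^ (4 * k - 2 * i) *
      (1 : ℂ) ^ (2 * i) = (-1 : ℂ) ^ (i + k) / 2 ^ (2 * k) := by
  set a : ℂ := (Real.sqrt (1/6) : ℂ) with ha'
  set b : ℂ := (Real.sqrt (3/2) : ℂ) with hb'
  have ha : a ^ 2 = 1/6 := by
    rw [ha', ← Complex.ofReal_pow, Real.sq_sqrt (by norm_num : (0:ℝ) ≤ 1/6)]; norm_num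
  have hb : b ^ 2 = 3/2 := by
    rw [hb', ← Complex.ofReal_pow, Real.sq_sqrt (by norm_num : (0:ℝ) ≤ 3/2)]; norm_num
  have hab : a * b = 1/2 := by
    rw [ha', hb', ← Complex.ofReal_mul, ← Real.sqrt_mul (by norm_num : (0:ℝ) ≤ 1/6)]
    rw [show (1/6 : ℝ) * (3/2) = (1/2)^2 by norm_num, Real.sqrt_sq (by norm_num : (0:ℝ) ≤ 1/2)]
    norm_num
  have hA2 : ((1 - om) * a + om * b) ^ 2 = -(2 : ℂ)⁻¹ := by
    linear_combination ((1 - om)^2) * ha + (2 * om * (1 - om)) * hab + (om^2) * hb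
      + (2/3 : ℂ) * om_rel
  set j : ℕ := 2 * k - i with hj'
  have hj : i + j = 2 * k := by omega
  have hpow : ((1 - om) * a + om * b) ^ (4 * k - 2 * i) = (-(2 : ℂ)⁻¹) ^ j := by
    rw [show 4 * k - 2 * i = 2 * j by omega, pow_mul, hA2]
  rw [hpow, one_pow, mul_one]
  rw [show (-(2:ℂ)⁻¹) = (-1) * (2:ℂ)⁻¹ by ring, mul_pow]
  rw [show (-1:ℂ)^k * ((2:ℂ)⁻¹)^i * ((-1:ℂ)^j * ((2:ℂ)⁻¹)^j)
      = ((-1:ℂ)^k * (-1:ℂ)^j) * (((2:ℂ)⁻¹)^i * ((2:ℂ)⁻¹)^j) by ring]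
  rw [← pow_add, ← pow_add, hj]
  rw [neg_one_pow_congr' (show (k + j) % 2 = (i + k) % 2 by omega)]
  rw [inv_pow, div_eq_mul_inv]

lemma theta_c_tendsto (c : ℝ) (hc : 0 < c) :
    Tendsto (fun z : ℍ => jacobiTheta ((c : ℂ) * (3 * (z : ℂ) + 1)))
      UpperHalfPlane.atImInfty (nhds 1) := by
  refine theta_tendsto_one.comp ?_
  rw [tendsto_comap_iff]
  have heq : ((fun τ : ℂ => τ.im) ∘ fun z : ℍ => (c : ℂ) * (3 * (z : ℂ) + 1))
      = fun z : ℍ => 3 * c * UpperHalfPlane.im z := by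
    funext z
    simp only [Function.comp_apply, Complex.mul_im, Complex.ofReal_re, Complex.ofReal_im,
      Complex.add_im, Complex.add_re, Complex.mul_im, Complex.one_im, Complex.one_re]
    simp [Complex.mul_im, UpperHalfPlane.coe_im]
    ring
  rw [heq]
  have him : Tendsto UpperHalfPlane.im UpperHalfPlane.atImInfty atTop := tendsto_comap
  exact him.const_mul_atTop (by positivity)

/-- The first term of the Fourier expansion of `F(z) = φ^{4k−2i}(z) φ^{2i}(3z)` at the
cusp `1/3`. -/
theorem phi_pow_first_term_at_cusp_13 (k i : ℕ) (hk : 2 ≤ k) (hi : i ≤ 2 * k) :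
    Filter.Tendsto (fun z : UpperHalfPlane =>
        (((3 : ℂ) * (z : ℂ) + 1) ^ (2 * k))⁻¹ *
          (phi ((z : ℂ) / ((3 : ℂ) * (z : ℂ) + 1)) ^ (4 * k - 2 * i) *
            phi (3 * ((z : ℂ) / ((3 : ℂ) * (z : ℂ) + 1))) ^ (2 * i)))
      UpperHalfPlane.atImInfty
      (nhds ((-1 : ℂ) ^ (i + k) / 2 ^ (2 * k))) := by
  have hG : Tendsto (fun z : ℍ =>
      (-1 : ℂ) ^ k * ((2 : ℂ)⁻¹) ^ i *
        ((1 - om) * (Real.sqrt (1/6) : ℂ) * jacobiTheta (((1/6 : ℝ) : ℂ) * (3 * (z : ℂ) + 1))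
          + om * (Real.sqrt (3/2) : ℂ) * jacobiTheta (((3/2 : ℝ) : ℂ) * (3 * (z : ℂ) + 1)))
          ^ (4 * k - 2 * i) *
        (jacobiTheta (((1/2 : ℝ) : ℂ) * (3 * (z : ℂ) + 1))) ^ (2 * i))
      UpperHalfPlane.atImInfty
      (nhds ((-1 : ℂ) ^ k * ((2 : ℂ)⁻¹) ^ i *
        ((1 - om) * (Real.sqrt (1/6) : ℂ) + om * (Real.sqrt (3/2) : ℂ)) ^ (4 * k - 2 * i) *
        (1 : ℂ) ^ (2 * i))) := by
    have h1 := theta_c_tendsto (1/6) (by norm_num)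
    have h2 := theta_c_tendsto (3/2) (by norm_num)
    have h3 := theta_c_tendsto (1/2) (by norm_num)
    have hA : Tendsto (fun z : ℍ =>
        (1 - om) * (Real.sqrt (1/6) : ℂ) * jacobiTheta (((1/6 : ℝ) : ℂ) * (3 * (z : ℂ) + 1))
          + om * (Real.sqrt (3/2) : ℂ) * jacobiTheta (((3/2 : ℝ) : ℂ) * (3 * (z : ℂ) + 1)))
        UpperHalfPlane.atImInfty
        (nhds ((1 - om) * (Real.sqrt (1/6) : ℂ) + om * (Real.sqrt (3/2) : ℂ))) := by
      have := ((tendsto_const_nhds (x := (1 - om) * (Real.sqrt (1/6) : ℂ))).mul h1).add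
        ((tendsto_const_nhds (x := om * (Real.sqrt (3/2) : ℂ))).mul h2)
      simpa using this
    exact (tendsto_const_nhds.mul (hA.pow _)).mul (h3.pow _)
  rw [final_value k i hi] at hG
  refine hG.congr fun z => ?_
  -- pointwise equality
  set τ : ℂ := 3 * (z : ℂ) + 1 with hτdef
  have hτim : 0 < τ.im := by
    rw [hτdef]
    have : (3 * (z : ℂ) + 1).im = 3 * UpperHalfPlane.im z := by
      simp [Complex.add_im, Complex.mul_im, UpperHalfPlane.coe_im]
    rw [this]
    linarith [z.im_pos]
  have hz : (z : ℂ) = (τ - 1) / 3 := by rw [hτdef]; ring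
  rw [show (z : ℂ) / ((3 : ℂ) * (z : ℂ) + 1) = ((τ - 1)/3) / τ by rw [← hτdef, ← hz]]
  rw [phiw τ hτim, phi3w τ hτim]
  exact (alg k i hi τ _ _ hτim).symm
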